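/- Let 1 ≤ p < ∞, μ ∈ M^p, k ≥ 1, and let c = (c₁,…,c_k) ∈ Ω^k be a codebook. Define μ̂(c) := Σ_{j=1}^{k} μ(V_j(c))·δ_{c_j}. Then for every choice of nonnegative weights m₁,…,m_k and ν := Σ_{j=1}^{k} m_j·δ_{c_j}, one has OT_p(μ̂(c), μ) ≤ OT_p(ν, μ). -/

import Mathlib

open MeasureTheory ENNReal Set

noncomputable section

abbrev E2 := EuclideanSpace ℝ (Fin 2)

/-- The open half-plane `Ω` above the diagonal. -/
def Omega : Set E2 := {x | x 0 < x 1}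

/-- The diagonal `∂Ω`. -/
def diagSet : Set E2 := {x | x 0 = x 1}

/-- `Ω̄ = Ω ∪ ∂Ω`. -/
def OmegaBar : Set E2 := Omega ∪ diagSet

/-- Euclidean distance of a point to the diagonal. -/
def dDiag (x : E2) : ℝ := Metric.infDist x diagSet

/-- Total persistence `Pers_p(μ) = ∫_Ω ‖x-∂Ω‖^p dμ(x)`. -/
def Pers (p : ℝ) (μ : Measure E2) : ℝ≥0∞ :=
  ∫⁻ x in Omega, ENNReal.ofReal (dDiag x ^ p) ∂μ

/-- Admissible partial transport plans: measures on `Ω̄ × Ω̄` whose first (resp. second)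
marginal coincides with `μ` (resp. `ν`) on `Ω`. -/
def Adm (μ ν : Measure E2) : Set (Measure (E2 × E2)) :=
  {π | (π.map Prod.fst).restrict Omega = μ.restrict Omega ∧
       (π.map Prod.snd).restrict Omega = ν.restrict Omega ∧
       π ((OmegaBar ×ˢ OmegaBar)ᶜ) = 0}

/-- `OT_p(μ,ν)^p`, the optimal partial transport cost. -/
def OTpow (p : ℝ) (μ ν : Measure E2) : ℝ≥0∞ :=
  ⨅ π ∈ Adm μ ν, ∫⁻ z, ENNReal.ofReal (dist z.1 z.2 ^ p) ∂π

/-- The distance `OT_p(μ,ν)`. -/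
def OTp (p : ℝ) (μ ν : Measure E2) : ℝ≥0∞ := (OTpow p μ ν) ^ (1/p)

/-- The closed ℓ¹-ball `A_L` of radius `L/√2` centered at `(-L/√8, L/√8)`. -/
def ballA (L : ℝ) : Set E2 :=
  {x | |x 0 + L / Real.sqrt 8| + |x 1 - L / Real.sqrt 8| ≤ L / Real.sqrt 2}

/-- Membership in `M^q_{L,M}`: supported in `Ω`, in `A_L`, with `Pers_q ≤ M`. -/
def MemMq (q L M : ℝ) (μ : Measure E2) : Prop :=
  μ Omegaᶜ = 0 ∧ μ (ballA L)ᶜ = 0 ∧ Pers q μ ≤ ENNReal.ofReal M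

/-- Empirical EPD `μ̄_n = (1/n)(μ₁ + ⋯ + μ_n)` of a sample of `n` persistence measures. -/
def empEPD (n : ℕ) (ω : Fin n → Measure E2) : Measure E2 :=
  (n : ℝ≥0∞)⁻¹ • ∑ i : Fin n, ω i

/-- Distance from `x` to the `j`-th centroid, the last index standing for the diagonal. -/
def cdistC (k : ℕ) (c : Fin k → E2) (j : Fin (k+1)) (x : E2) : ℝ :=
  if h : (j : ℕ) < k then dist x (c ⟨j, h⟩) else dDiag x

/-- Voronoi cells `V_j(c)` (the last cell being the diagonal cell `V_{k+1}`). -/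
def Vcell (k : ℕ) (c : Fin k → E2) (j : Fin (k+1)) : Set E2 :=
  {x ∈ Omega | (∀ j' : Fin (k+1), j' < j → cdistC k c j x ≤ cdistC k c j' x) ∧
               (∀ j' : Fin (k+1), j < j' → cdistC k c j x < cdistC k c j' x)}

/-- The distortion `R_{k,p}(c)`. -/
def distortion (p : ℝ) (μ : Measure E2) (k : ℕ) (c : Fin k → E2) : ℝ≥0∞ :=
  (∑ j : Fin (k+1), ∫⁻ x in Vcell k c j, ENNReal.ofReal (cdistC k c j x ^ p) ∂μ) ^ (1/p)

/-- The optimal distortion `R_k^* = inf {R_{k,p}(c) : c ∈ Ω̄^k}`. -/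
def Rstar (p : ℝ) (μ : Measure E2) (k : ℕ) : ℝ≥0∞ :=
  ⨅ (c : Fin k → E2) (_ : ∀ j, c j ∈ OmegaBar), distortion p μ k c

/-- The set `C_k` of optimal codebooks. -/
def Copt (p : ℝ) (μ : Measure E2) (k : ℕ) : Set (Fin k → E2) :=
  {c | (∀ j, c j ∈ OmegaBar) ∧ distortion p μ k c = Rstar p μ k}

/-- Support of a measure. -/
def msupport (μ : Measure E2) : Set E2 :=
  {x | ∀ U : Set E2, IsOpen U → x ∈ U → 0 < μ U}

/-- Euclidean distance between codebooks seen as vectors of `ℝ^{2k}`. -/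
def cbDist (k : ℕ) (c c' : Fin k → E2) : ℝ :=
  Real.sqrt (∑ j : Fin k, dist (c j) (c' j) ^ 2)

/-- Euclidean norm on `(ℝ²)^k`. -/
def pnorm2 (k : ℕ) (v : Fin k → E2) : ℝ := Real.sqrt (∑ j : Fin k, ‖v j‖ ^ 2)

/-- Distance between the `j`-th and `j'`-th centroids, the last index standing
for the diagonal. -/
def cdistPt (k : ℕ) (c : Fin k → E2) (j j' : Fin (k+1)) : ℝ :=
  if h : (j : ℕ) < k then
    (if h' : (j' : ℕ) < k then dist (c ⟨j, h⟩) (c ⟨j', h'⟩) else dDiag (c ⟨j, h⟩))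
  else (if h' : (j' : ℕ) < k then dDiag (c ⟨j', h'⟩) else 0)

/-- The set `N(c)` of points lying on a boundary between two Voronoi cells. -/
def Nset (k : ℕ) (c : Fin k → E2) : Set E2 :=
  {x ∈ Omega | ∃ j j' : Fin (k+1), j < j' ∧ x ∈ Vcell k c j ∧ cdistC k c j x = cdistC k c j' x}

/-- The `t`-neighborhood `A^t` of `A` in `Ω`. -/
def tN (A : Set E2) (t : ℝ) : Set E2 := {x ∈ Omega | ∃ a ∈ A, dist x a ≤ t}

/-- `w₂(c, m)_j = ∫_{V_j(c)} x dm(x)`. -/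
def w2 (k : ℕ) (c : Fin k → E2) (m : Measure E2) (j : Fin k) : E2 :=
  ∫ x in Vcell k c j.castSucc, x ∂m

/-- Absolute difference in `ℝ≥0∞`. -/
def eabs (a b : ℝ≥0∞) : ℝ≥0∞ := (a - b) + (b - a)

lemma omega_meas : MeasurableSet Omega := measurableSet_lt (by fun_prop) (by fun_prop)

lemma diag_meas : MeasurableSet diagSet := measurableSet_eq_fun (by fun_prop) (by fun_prop)

lemma omegaBar_meas : MeasurableSet OmegaBar := omega_meas.union diag_meas

def sProj (x : E2) : E2 := WithLp.toLp 2 (fun _ => (x 0 + x 1)/2)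

lemma sProj_cont : Continuous sProj := by
  exact (PiLp.continuous_toLp 2 _).comp (continuous_pi fun i => by fun_prop)

lemma sProj_mem (x : E2) : sProj x ∈ diagSet := rfl

lemma sProj_not_omega (x : E2) : sProj x ∉ Omega := by
  simp only [Omega, mem_setOf_eq, sProj, PiLp.toLp_apply, not_lt, le_refl]

lemma dist_eq' (x y : E2) : dist x y = Real.sqrt ((x 0 - y 0)^2 + (x 1 - y 1)^2) := by
  rw [EuclideanSpace.dist_eq]
  simp [Fin.sum_univ_two, Real.dist_eq, sq_abs]

lemma sProj_min (x : E2) (y : E2) (hy : y ∈ diagSet) : dist x (sProj x) ≤ dist x y := by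
  have hyd : y 0 = y 1 := hy
  rw [dist_eq', dist_eq']
  apply Real.sqrt_le_sqrt
  show (x 0 - (x 0 + x 1)/2)^2 + (x 1 - (x 0 + x 1)/2)^2 ≤ _
  rw [hyd]
  nlinarith [sq_nonneg (x 0 + x 1 - 2 * y 1)]

lemma dDiag_eq (x : E2) : dDiag x = dist x (sProj x) := by
  apply le_antisymm (Metric.infDist_le_dist_of_mem (sProj_mem x))
  by_contra h
  push_neg at h
  obtain ⟨y, hy, hlt⟩ := (Metric.infDist_lt_iff ⟨sProj x, sProj_mem x⟩).mp h
  exact absurd hlt (not_lt.mpr (sProj_min x y hy))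

lemma cdistC_cont (k : ℕ) (c : Fin k → E2) (j : Fin (k+1)) : Continuous (cdistC k c j) := by
  unfold cdistC
  split_ifs
  · exact continuous_id.dist continuous_const
  · exact Metric.continuous_infDist_pt _

lemma cdistC_nonneg (k : ℕ) (c : Fin k → E2) (j : Fin (k+1)) (x : E2) : 0 ≤ cdistC k c j x := by
  unfold cdistC; split_ifs
  · exact dist_nonneg
  · exact Metric.infDist_nonneg

lemma cdistC_castSucc (k : ℕ) (c : Fin k → E2) (j : Fin k) (x : E2) :
    cdistC k c j.castSucc x = dist x (c j) := by
  have h : ((j.castSucc : ℕ)) < k := by simpa using j.isLt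
  unfold cdistC
  rw [dif_pos h]
  have e : (⟨(j.castSucc : ℕ), h⟩ : Fin k) = j := Fin.ext (by simp)
  rw [e]

lemma cdistC_last (k : ℕ) (c : Fin k → E2) (x : E2) :
    cdistC k c (Fin.last k) x = dDiag x := by
  unfold cdistC
  rw [dif_neg (by simp)]

lemma Vcell_meas (k : ℕ) (c : Fin k → E2) (j : Fin (k+1)) : MeasurableSet (Vcell k c j) := by
  have : Vcell k c j = Omega ∩
      ((⋂ (j' : Fin (k+1)) (_ : j' < j), {x | cdistC k c j x ≤ cdistC k c j' x}) ∩
       (⋂ (j' : Fin (k+1)) (_ : j < j'), {x | cdistC k c j x < cdistC k c j' x})) := by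
    ext x
    simp [Vcell, Set.mem_iInter]
    tauto
  rw [this]
  refine omega_meas.inter (MeasurableSet.inter ?_ ?_) <;>
  · refine MeasurableSet.iInter fun j' => MeasurableSet.iInter fun _ => ?_
    first
    | exact measurableSet_le (cdistC_cont k c _).measurable (cdistC_cont k c _).measurable
    | exact measurableSet_lt (cdistC_cont k c _).measurable (cdistC_cont k c _).measurable

lemma Vcell_subset (k : ℕ) (c : Fin k → E2) (j : Fin (k+1)) : Vcell k c j ⊆ Omega :=
  fun _ hx => hx.1

lemma Vcell_disjoint (k : ℕ) (c : Fin k → E2) : Pairwise (Function.onFun Disjoint (Vcell k c)) := by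
  intro j j' hne
  rw [Function.onFun, Set.disjoint_left]
  rintro x ⟨_, h1, h2⟩ ⟨_, h1', h2'⟩
  rcases hne.lt_or_gt with h | h
  · exact absurd (h1' j h) (not_le.mpr (h2 j' h))
  · exact absurd (h1 j' h) (not_le.mpr (h2' j h))

lemma Vcell_exists (k : ℕ) (c : Fin k → E2) {x : E2} (hx : x ∈ Omega) :
    ∃ j, x ∈ Vcell k c j := by
  classical
  obtain ⟨j₀, _, hmin⟩ := Finset.exists_min_image Finset.univ (fun j => cdistC k c j x)
    ⟨0, Finset.mem_univ 0⟩
  set S : Finset (Fin (k+1)) := Finset.univ.filter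
    (fun j => ∀ j', cdistC k c j x ≤ cdistC k c j' x) with hS
  have hj₀S : j₀ ∈ S := Finset.mem_filter.mpr
    ⟨Finset.mem_univ _, fun j' => hmin j' (Finset.mem_univ _)⟩
  have hSne : S.Nonempty := ⟨j₀, hj₀S⟩
  refine ⟨S.max' hSne, hx, fun j' _ => ?_, fun j' hj' => ?_⟩
  · exact (Finset.mem_filter.mp (S.max'_mem hSne)).2 j'
  · have hmax := (Finset.mem_filter.mp (S.max'_mem hSne)).2
    rcases lt_or_eq_of_le (hmax j') with h | h
    · exact h
    · exfalso
      have : j' ∈ S := by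
        simp only [hS, Finset.mem_filter, Finset.mem_univ, true_and]
        intro j''
        rw [← h]; exact hmax j''
      exact absurd (S.le_max' j' this) (not_le.mpr hj')

lemma Vcell_union (k : ℕ) (c : Fin k → E2) : (⋃ j, Vcell k c j) = Omega := by
  apply Set.Subset.antisymm (Set.iUnion_subset (Vcell_subset k c))
  intro x hx
  obtain ⟨j, hj⟩ := Vcell_exists k c hx
  exact Set.mem_iUnion.mpr ⟨j, hj⟩

lemma Vcell_inf (k : ℕ) (c : Fin k → E2) (j : Fin (k+1)) {x : E2} (hx : x ∈ Vcell k c j)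
    (j' : Fin (k+1)) : cdistC k c j x ≤ cdistC k c j' x := by
  rcases lt_trichotomy j' j with h | h | h
  · exact hx.2.1 j' h
  · rw [h]
  · exact (hx.2.2 j' h).le

lemma restrict_omega_sum (k : ℕ) (c : Fin k → E2) (μ : Measure E2) :
    μ.restrict Omega = ∑ j : Fin (k+1), μ.restrict (Vcell k c j) := by
  rw [← Vcell_union k c, Measure.restrict_iUnion (Vcell_disjoint k c) (Vcell_meas k c),
    Measure.sum_fintype]

lemma map_finset_sum_meas {α : Type*} [MeasurableSpace α] {ι : Type*} (s : Finset ι) (μ : ι → Measure α)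
    {β : Type*} [MeasurableSpace β] {f : α → β} (hf : Measurable f) :
    (∑ i ∈ s, μ i).map f = ∑ i ∈ s, (μ i).map f := by
  simp_rw [← Measure.mapₗ_apply_of_measurable hf]
  exact map_sum (Measure.mapₗ f) μ s

-- the minimal distance function
def minD (k : ℕ) (c : Fin k → E2) (x : E2) : ℝ :=
  Finset.univ.inf' ⟨0, Finset.mem_univ 0⟩ (fun j : Fin (k+1) => cdistC k c j x)

lemma minD_cont (k : ℕ) (c : Fin k → E2) : Continuous (minD k c) :=
  Continuous.finset_inf'_apply _ (fun j _ => cdistC_cont k c j)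

lemma minD_nonneg (k : ℕ) (c : Fin k → E2) (x : E2) : 0 ≤ minD k c x :=
  Finset.le_inf' _ _ (fun j _ => cdistC_nonneg k c j x)

lemma minD_eq_on_cell (k : ℕ) (c : Fin k → E2) (j : Fin (k+1)) {x : E2}
    (hx : x ∈ Vcell k c j) : minD k c x = cdistC k c j x :=
  le_antisymm (Finset.inf'_le _ (Finset.mem_univ j))
    (Finset.le_inf' _ _ (fun j' _ => Vcell_inf k c j hx j'))

/-- Lemma: optimality of the Voronoi weights.
For a codebook `c ∈ Ω^k`, the measure `μ̂(c) = Σ_j μ(V_j(c)) δ_{c_j}` satisfies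
`OT_p(μ̂(c), μ) ≤ OT_p(ν, μ)` for every `ν = Σ_j m_j δ_{c_j}` with nonnegative weights. -/
theorem statement4 (p : ℝ) (hp : 1 ≤ p) (μ : Measure E2)
    (hμΩ : μ Omegaᶜ = 0) (hμp : Pers p μ < ⊤)
    (k : ℕ) (hk : 1 ≤ k) (c : Fin k → E2) (hc : ∀ j, c j ∈ Omega)
    (m : Fin k → ℝ) (hm : ∀ j, 0 ≤ m j) :
    OTp p (∑ j : Fin k, μ (Vcell k c j.castSucc) • Measure.dirac (c j)) μ ≤
      OTp p (∑ j : Fin k, ENNReal.ofReal (m j) • Measure.dirac (c j)) μ := by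
  classical
  have hp0 : (0:ℝ) ≤ p := le_trans zero_le_one hp
  set μhat : Measure E2 := ∑ j : Fin k, μ (Vcell k c j.castSucc) • Measure.dirac (c j) with hμhat
  set ν : Measure E2 := ∑ j : Fin k, ENNReal.ofReal (m j) • Measure.dirac (c j) with hν
  -- cost integrand
  set f : E2 × E2 → ℝ≥0∞ := fun z => ENNReal.ofReal (dist z.1 z.2 ^ p) with hf
  have hfm : Measurable f := by
    apply ENNReal.measurable_ofReal.comp
    exact ((continuous_fst.dist continuous_snd).rpow_const (fun x => Or.inr hp0)).measurable
  -- target value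
  set V : ℝ≥0∞ :=
    ∑ j : Fin (k+1), ∫⁻ x in Vcell k c j, ENNReal.ofReal (cdistC k c j x ^ p) ∂μ with hV
  -- H = min distance cost
  set H : E2 → ℝ≥0∞ := fun x => ENNReal.ofReal (minD k c x ^ p) with hH
  have hHm : Measurable H :=
    ENNReal.measurable_ofReal.comp
      ((minD_cont k c).rpow_const (fun x => Or.inr hp0)).measurable
  have hVH : V = ∫⁻ x in Omega, H x ∂μ := by
    rw [hV, restrict_omega_sum k c μ, lintegral_finset_sum_measure]
    congr 1
    ext j
    apply setLIntegral_congr_fun (Vcell_meas k c j)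
    exact fun x hx => by rw [hH]; simp only; rw [minD_eq_on_cell k c j hx]
  -- ===== Step 1 : OTpow μhat μ ≤ V, via the explicit Voronoi plan =====
  have step1 : OTpow p μhat μ ≤ V := by
    set π₀ : Measure (E2 × E2) :=
      (∑ j : Fin k, (μ.restrict (Vcell k c j.castSucc)).map (fun x => (c j, x)))
        + (μ.restrict (Vcell k c (Fin.last k))).map (fun x => (sProj x, x)) with hπ₀
    have hemb : ∀ j : Fin k, Measurable (fun x : E2 => (c j, x)) :=
      fun j => measurable_const.prodMk measurable_id
    have hsemb : Measurable (fun x : E2 => (sProj x, x)) :=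
      sProj_cont.measurable.prodMk measurable_id
    have hmem : π₀ ∈ Adm μhat μ := by
      refine ⟨?_, ?_, ?_⟩
      · -- first marginal
        have h1 : π₀.map Prod.fst
            = (∑ j : Fin k, μ (Vcell k c j.castSucc) • Measure.dirac (c j))
              + (μ.restrict (Vcell k c (Fin.last k))).map sProj := by
          rw [hπ₀, Measure.map_add _ _ measurable_fst, map_finset_sum_meas _ _ measurable_fst]
          congr 1
          · congr 1
            ext j
            rw [Measure.map_map measurable_fst (hemb j)]
            have : (Prod.fst ∘ fun x : E2 => (c j, x)) = fun _ : E2 => c j := rfl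
            rw [this, Measure.map_const, Measure.restrict_apply_univ]
          · rw [Measure.map_map measurable_fst hsemb]
            rfl
        rw [h1, Measure.restrict_add]
        have h2 : ((μ.restrict (Vcell k c (Fin.last k))).map sProj).restrict Omega = 0 := by
          rw [Measure.restrict_eq_zero, Measure.map_apply sProj_cont.measurable omega_meas]
          have : sProj ⁻¹' Omega = ∅ := by
            ext x; simp [sProj_not_omega x]
          rw [this, measure_empty]
        rw [h2, add_zero]
      · -- second marginal
        have h1 : π₀.map Prod.snd = μ.restrict Omega := by
          rw [hπ₀, Measure.map_add _ _ measurable_snd, map_finset_sum_meas _ _ measurable_snd]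
          have e1 : ∀ j : Fin k, ((μ.restrict (Vcell k c j.castSucc)).map (fun x => (c j, x))).map Prod.snd
              = μ.restrict (Vcell k c j.castSucc) := by
            intro j
            rw [Measure.map_map measurable_snd (hemb j)]
            exact Measure.map_id
          have e2 : ((μ.restrict (Vcell k c (Fin.last k))).map (fun x => (sProj x, x))).map Prod.snd
              = μ.restrict (Vcell k c (Fin.last k)) := by
            rw [Measure.map_map measurable_snd hsemb]
            exact Measure.map_id
          simp_rw [e1, e2]
          rw [restrict_omega_sum k c μ, Fin.sum_univ_castSucc]
        rw [h1, Measure.restrict_restrict omega_meas, Set.inter_self]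
      · -- concentrated on OmegaBar ×ˢ OmegaBar
        have hCm : MeasurableSet ((OmegaBar ×ˢ OmegaBar)ᶜ) :=
          (omegaBar_meas.prod omegaBar_meas).compl
        rw [hπ₀]
        simp only [Measure.add_apply, Measure.finset_sum_apply]
        have t1 : ∀ j : Fin k,
            ((μ.restrict (Vcell k c j.castSucc)).map (fun x => (c j, x))) ((OmegaBar ×ˢ OmegaBar)ᶜ) = 0 := by
          intro j
          rw [Measure.map_apply (hemb j) hCm, Measure.restrict_apply (hCm.preimage (hemb j))]
          apply measure_mono_null (t := ∅) _ (measure_empty)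
          rintro x ⟨hx1, hx2⟩
          exact hx1 ⟨Or.inl (hc j), Or.inl (Vcell_subset k c _ hx2)⟩
        have t2 : ((μ.restrict (Vcell k c (Fin.last k))).map (fun x => (sProj x, x))) ((OmegaBar ×ˢ OmegaBar)ᶜ) = 0 := by
          rw [Measure.map_apply hsemb hCm, Measure.restrict_apply (hCm.preimage hsemb)]
          apply measure_mono_null (t := ∅) _ (measure_empty)
          rintro x ⟨hx1, hx2⟩
          exact hx1 ⟨Or.inr (sProj_mem x), Or.inl (Vcell_subset k c _ hx2)⟩
        simp only [t2, add_zero]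
        exact Finset.sum_eq_zero (fun j _ => t1 j)
    -- cost of π₀ equals V
    have hcost : ∫⁻ z, f z ∂π₀ = V := by
      rw [hπ₀, lintegral_add_measure, lintegral_finset_sum_measure]
      have e1 : ∀ j : Fin k, ∫⁻ z, f z ∂((μ.restrict (Vcell k c j.castSucc)).map (fun x => (c j, x)))
          = ∫⁻ x in Vcell k c j.castSucc, ENNReal.ofReal (cdistC k c j.castSucc x ^ p) ∂μ := by
        intro j
        rw [lintegral_map hfm (hemb j)]
        apply lintegral_congr
        intro x
        rw [hf]; simp only
        rw [dist_comm, cdistC_castSucc]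
      have e2 : ∫⁻ z, f z ∂((μ.restrict (Vcell k c (Fin.last k))).map (fun x => (sProj x, x)))
          = ∫⁻ x in Vcell k c (Fin.last k), ENNReal.ofReal (cdistC k c (Fin.last k) x ^ p) ∂μ := by
        rw [lintegral_map hfm hsemb]
        apply lintegral_congr
        intro x
        rw [hf]; simp only
        rw [dist_comm, ← dDiag_eq, cdistC_last]
      simp_rw [e1, e2]
      rw [hV, Fin.sum_univ_castSucc]
    calc OTpow p μhat μ ≤ ∫⁻ z, f z ∂π₀ := iInf₂_le π₀ hmem
    _ = V := hcost
  -- ===== Step 2 : V ≤ OTpow ν μ =====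
  have step2 : V ≤ OTpow p ν μ := by
    apply le_iInf₂
    intro π hπ
    obtain ⟨hπ1, hπ2, hπ3⟩ := hπ
    set T : Set (E2 × E2) := Prod.snd ⁻¹' Omega with hT
    set S : Set (E2 × E2) := T ∩ Prod.fst ⁻¹' (Set.range c ∪ diagSet) with hS
    have hrange_meas : MeasurableSet (Set.range c ∪ diagSet) :=
      ((Set.finite_range c).measurableSet).union diag_meas
    have hTmeas : MeasurableSet T := omega_meas.preimage measurable_snd
    have hSmeas : MeasurableSet S := hTmeas.inter (hrange_meas.preimage measurable_fst)
    -- π (T \ S) = 0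
    have hnull : π (T \ S) = 0 := by
      have hsub : T \ S ⊆ (Prod.fst ⁻¹' (Omega \ Set.range c)) ∪ ((OmegaBar ×ˢ OmegaBar)ᶜ) := by
        rintro z ⟨hzT, hzS⟩
        simp only [hS, Set.mem_inter_iff, not_and] at hzS
        have hz1 : z.1 ∉ Set.range c ∪ diagSet := hzS hzT
        by_cases hzb : z ∈ OmegaBar ×ˢ OmegaBar
        · left
          rcases hzb.1 with h | h
          · exact ⟨h, fun hr => hz1 (Or.inl hr)⟩
          · exact absurd (Or.inr h) hz1
        · exact Or.inr hzb
      apply measure_mono_null hsub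
      apply le_antisymm _ (zero_le)
      apply le_trans (measure_union_le _ _)
      rw [hπ3, add_zero]
      have : π (Prod.fst ⁻¹' (Omega \ Set.range c)) = (π.map Prod.fst) (Omega \ Set.range c) := by
        rw [Measure.map_apply measurable_fst (omega_meas.diff (Set.finite_range c).measurableSet)]
      rw [this]
      have h1 : (π.map Prod.fst) (Omega \ Set.range c)
          = ((π.map Prod.fst).restrict Omega) (Omega \ Set.range c) := by
        rw [Measure.restrict_apply (omega_meas.diff (Set.finite_range c).measurableSet),
          Set.inter_eq_left.mpr Set.diff_subset]
      rw [h1, hπ1, Measure.restrict_apply (omega_meas.diff (Set.finite_range c).measurableSet)]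
      apply le_trans (measure_mono (Set.inter_subset_left))
      rw [hν]
      simp only [Measure.finset_sum_apply, Measure.smul_apply, smul_eq_mul]
      apply le_of_eq
      apply Finset.sum_eq_zero
      intro j _
      rw [Measure.dirac_apply' _ (omega_meas.diff (Set.finite_range c).measurableSet)]
      have : c j ∉ Omega \ Set.range c := fun h => h.2 ⟨j, rfl⟩
      rw [Set.indicator_of_notMem this]
      simp
    -- pointwise bound on S
    have hpt : ∀ z ∈ S, H z.2 ≤ f z := by
      rintro z ⟨hzT, hz1⟩
      rw [hH, hf]
      simp only
      apply ENNReal.ofReal_le_ofReal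
      apply Real.rpow_le_rpow (minD_nonneg k c z.2) _ hp0
      rcases hz1 with ⟨j, hj⟩ | hdiag
      · calc minD k c z.2 ≤ cdistC k c j.castSucc z.2 := Finset.inf'_le _ (Finset.mem_univ _)
        _ = dist z.2 (c j) := cdistC_castSucc k c j z.2
        _ = dist z.1 z.2 := by rw [← hj, dist_comm]
      · calc minD k c z.2 ≤ cdistC k c (Fin.last k) z.2 := Finset.inf'_le _ (Finset.mem_univ _)
        _ = dDiag z.2 := cdistC_last k c z.2
        _ ≤ dist z.2 z.1 := Metric.infDist_le_dist_of_mem hdiag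
        _ = dist z.1 z.2 := dist_comm _ _
    calc V = ∫⁻ x in Omega, H x ∂μ := hVH
    _ = ∫⁻ x in Omega, H x ∂(π.map Prod.snd) := by rw [← hπ2]
    _ = ∫⁻ z in T, H z.2 ∂π := setLIntegral_map omega_meas hHm measurable_snd
    _ = ∫⁻ z in S, H z.2 ∂π := by
        have hTS : T = S ∪ (T \ S) := (Set.union_diff_cancel (Set.inter_subset_left)).symm
        rw [hTS, lintegral_union (hTmeas.diff hSmeas) Set.disjoint_sdiff_right,
          setLIntegral_measure_zero _ _ hnull, add_zero]
    _ ≤ ∫⁻ z in S, f z ∂π := setLIntegral_mono hfm hpt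
    _ ≤ ∫⁻ z, f z ∂π := setLIntegral_le_lintegral _ _
  -- conclude
  rw [OTp, OTp]
  exact ENNReal.rpow_le_rpow (le_trans step1 step2) (by positivity)


end
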